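/- The matrices M^{ij} = -½ V^T E^{ij} V for 1 ≤ i < j ≤ n are linearly independent in S^{n-1}, where V is an n×(n-1) matrix with V^T e = 0 and V^T V = I. -/

import Mathlib

open Matrix BigOperators

/-- `E^{ij}`: the symmetric matrix with 1's in entries `(i,j)` and `(j,i)`, 0 elsewhere. -/
def Eij {n : ℕ} (i j : Fin n) : Matrix (Fin n) (Fin n) ℝ :=
  Matrix.single i j 1 + Matrix.single j i 1

theorem stmt6 (n : ℕ) (V : Matrix (Fin n) (Fin (n - 1)) ℝ)
    (hVe : Vᵀ *ᵥ (fun _ => (1 : ℝ)) = 0) (hVV : Vᵀ * V = 1) :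
    LinearIndependent ℝ (fun q : {q : Fin n × Fin n // q.1 < q.2} =>
      (-(1/2) : ℝ) • (Vᵀ * Eij q.1.1 q.1.2 * V)) := by
  rcases Nat.eq_zero_or_pos n with h0 | hn
  · subst h0
    have : IsEmpty {q : Fin 0 × Fin 0 // q.1 < q.2} := ⟨fun q => q.1.1.elim0⟩
    exact linearIndependent_empty_type
  have hn0 : (n : ℝ) ≠ 0 := Nat.cast_ne_zero.mpr hn.ne'
  -- projection formula
  set J : Matrix (Fin n) (Fin n) ℝ := Matrix.of (fun _ _ => (1:ℝ)) with hJ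
  have hP : V * Vᵀ = 1 - (n:ℝ)⁻¹ • J := by
    set B : Matrix (Fin (n-1) ⊕ Unit) (Fin n) ℝ :=
      Matrix.of (fun c a => Sum.elim (fun j => Vᵀ j a) (fun _ => (n:ℝ)⁻¹) c) with hB
    set W : Matrix (Fin n) (Fin (n-1) ⊕ Unit) ℝ :=
      Matrix.of (fun a c => Sum.elim (fun j => V a j) (fun _ => (1:ℝ)) c) with hW
    have hBW : B * W = 1 := by
      ext c c'
      rcases c with j | _ <;> rcases c' with j' | _
      · have := congrFun (congrFun hVV j) j'
        simp only [Matrix.mul_apply, Matrix.one_apply, Matrix.transpose_apply] at this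
        simp [hB, hW, Matrix.mul_apply, Matrix.one_apply, this]
      · have := congrFun hVe j
        simp only [Matrix.mulVec, dotProduct, mul_one, Matrix.transpose_apply,
          Pi.zero_apply] at this
        simp [hB, hW, Matrix.mul_apply, Matrix.one_apply, this]
      · have := congrFun hVe j'
        simp only [Matrix.mulVec, dotProduct, mul_one, Matrix.transpose_apply,
          Pi.zero_apply] at this
        simp [hB, hW, Matrix.mul_apply, Matrix.one_apply, ← Finset.mul_sum, this]
      · simp [hB, hW, Matrix.mul_apply, Matrix.one_apply, Finset.sum_const,
          Finset.card_univ, inv_mul_cancel₀ hn0, mul_comm]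
        field_simp
    have hcard : Fin (n-1) ⊕ Unit ≃ Fin n := by
      refine Fintype.equivOfCardEq ?_
      simp [Nat.sub_add_cancel hn]
    have hWB : W * B = 1 := (Matrix.mul_eq_one_comm_of_equiv hcard).mp hBW
    ext a b
    have := congrFun (congrFun hWB a) b
    simp only [Matrix.mul_apply, hW, hB, Matrix.of_apply, Fintype.sum_sum_type,
      Finset.univ_unique, Finset.sum_singleton, Sum.elim_inl, Sum.elim_inr, one_mul, Matrix.transpose_apply] at this
    simp only [Matrix.mul_apply, Matrix.sub_apply, Matrix.smul_apply, hJ,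
      Matrix.of_apply, smul_eq_mul, mul_one, Matrix.transpose_apply]
    linarith [this]
  -- main argument
  rw [Fintype.linearIndependent_iff]
  intro g hg q0
  set A : Matrix (Fin n) (Fin n) ℝ :=
    ∑ q : {q : Fin n × Fin n // q.1 < q.2}, g q • Eij q.1.1 q.1.2 with hA
  have hAapp : ∀ i j : Fin n, A i j =
      ∑ q : {q : Fin n × Fin n // q.1 < q.2}, g q * Eij q.1.1 q.1.2 i j := by
    intro i j
    simp [hA, Matrix.sum_apply]
  have hEapp : ∀ (k l i j : Fin n), Eij k l i j =
      (if k = i ∧ l = j then (1:ℝ) else 0) + (if l = i ∧ k = j then (1:ℝ) else 0) := by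
    intro k l i j
    simp [Eij, Matrix.single, Matrix.add_apply]
  have hEsym : ∀ (k l i j : Fin n), Eij k l j i = Eij k l i j := by
    intro k l i j
    rw [hEapp, hEapp, add_comm]
    congr 1 <;> simp [and_comm]
  have hsym : ∀ i j, A j i = A i j := by
    intro i j
    rw [hAapp, hAapp]
    exact Finset.sum_congr rfl fun q _ => by rw [hEsym]
  have hdiag : ∀ i, A i i = 0 := by
    intro i
    rw [hAapp]
    refine Finset.sum_eq_zero fun q _ => ?_
    have hne : q.1.1 ≠ q.1.2 := ne_of_lt q.2
    rw [hEapp]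
    have h1 : ¬(q.1.1 = i ∧ q.1.2 = i) := fun h => hne (h.1.trans h.2.symm)
    have h2 : ¬(q.1.2 = i ∧ q.1.1 = i) := fun h => hne (h.2.trans h.1.symm)
    simp [h1, h2]
  have hAentry : ∀ (i j : Fin n) (h : i < j), A i j = g ⟨(i, j), h⟩ := by
    intro i j h
    rw [hAapp]
    rw [Finset.sum_eq_single (⟨(i, j), h⟩ : {q : Fin n × Fin n // q.1 < q.2})]
    · rw [hEapp]
      have : ¬(j = i ∧ i = j) := fun hc => (ne_of_lt h) hc.2
      simp [this]
    · intro q _ hq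
      rw [hEapp]
      have h1 : ¬(q.1.1 = i ∧ q.1.2 = j) := by
        intro hc
        exact hq (Subtype.ext (Prod.ext hc.1 hc.2))
      have h2 : ¬(q.1.2 = i ∧ q.1.1 = j) := by
        intro hc
        exact absurd (hc.2 ▸ hc.1 ▸ q.2) (not_lt.mpr h.le)
      simp [h1, h2]
    · intro hmem
      exact absurd (Finset.mem_univ _) hmem
  -- the sum hypothesis gives Vᵀ A V = 0
  have hVAV : Vᵀ * A * V = 0 := by
    have h1 : Vᵀ * A * V =
        ∑ q : {q : Fin n × Fin n // q.1 < q.2}, g q • (Vᵀ * Eij q.1.1 q.1.2 * V) := by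
      rw [hA, Matrix.mul_sum, Matrix.sum_mul]
      exact Finset.sum_congr rfl fun q _ => by
        rw [Matrix.mul_smul, Matrix.smul_mul]
    have h2 : (-(1/2) : ℝ) • (Vᵀ * A * V) = 0 := by
      rw [h1, Finset.smul_sum, ← hg]
      exact Finset.sum_congr rfl fun q _ => smul_comm _ _ _
    have := smul_eq_zero.mp h2
    rcases this with h | h
    · norm_num at h
    · exact h
  -- P A P = 0
  have hPAP : (1 - (n:ℝ)⁻¹ • J) * A * (1 - (n:ℝ)⁻¹ • J) = 0 := by
    rw [← hP]
    calc V * Vᵀ * A * (V * Vᵀ) = V * (Vᵀ * A * V) * Vᵀ := by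
          simp only [Matrix.mul_assoc]
      _ = 0 := by rw [hVAV, Matrix.mul_zero, Matrix.zero_mul]
  -- expand
  have hexpand : A - (n:ℝ)⁻¹ • (J * A) - (n:ℝ)⁻¹ • (A * J)
      + ((n:ℝ)⁻¹ * (n:ℝ)⁻¹) • (J * A * J) = 0 := by
    rw [← hPAP]
    simp only [Matrix.sub_mul, Matrix.mul_sub, Matrix.smul_mul, Matrix.mul_smul,
      Matrix.one_mul, Matrix.mul_one, smul_smul, Matrix.mul_assoc, smul_sub, smul_add]
    abel
  set r : Fin n → ℝ := fun i => ∑ k, A k i with hr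
  set S : ℝ := ∑ i, r i with hS
  have hJA : ∀ i j, (J * A) i j = r j := by
    intro i j
    simp [hJ, Matrix.mul_apply, hr]
  have hAJ : ∀ i j, (A * J) i j = r i := by
    intro i j
    simp only [hJ, Matrix.mul_apply, Matrix.of_apply, mul_one]
    rw [hr]
    exact Finset.sum_congr rfl fun k _ => hsym k i
  have hJAJ : ∀ i j, (J * A * J) i j = S := by
    intro i j
    simp only [Matrix.mul_apply, hJ, Matrix.of_apply, mul_one, one_mul]
    rfl
  have key : ∀ i j, A i j - (n:ℝ)⁻¹ * r j - (n:ℝ)⁻¹ * r i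
      + (n:ℝ)⁻¹ * (n:ℝ)⁻¹ * S = 0 := by
    intro i j
    have := congrFun (congrFun hexpand i) j
    simpa [Matrix.sub_apply, Matrix.add_apply, Matrix.smul_apply, hJA i j, hAJ i j,
      hJAJ i j] using this
  have hri : ∀ i, r i = (n:ℝ)⁻¹ * S / 2 := by
    intro i
    have hc : ((n:ℝ)⁻¹) ≠ 0 := inv_ne_zero hn0
    have h1 := key i i
    rw [hdiag i] at h1
    have h2 : (n:ℝ)⁻¹ * (2 * r i) = (n:ℝ)⁻¹ * ((n:ℝ)⁻¹ * S) := by linarith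
    have h3 := mul_left_cancel₀ hc h2
    linarith
  have hS0 : S = 0 := by
    have : S = ∑ i : Fin n, (n:ℝ)⁻¹ * S / 2 := by
      rw [hS]
      exact Finset.sum_congr rfl fun i _ => hri i
    rw [Finset.sum_const, Finset.card_univ, Fintype.card_fin] at this
    rw [nsmul_eq_mul] at this
    have h2 : (n:ℝ) * ((n:ℝ)⁻¹ * S / 2) = S / 2 := by
      field_simp
    rw [h2] at this
    linarith
  have hr0 : ∀ i, r i = 0 := by
    intro i
    rw [hri i, hS0]
    ring
  have hA0 : ∀ i j, A i j = 0 := by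
    intro i j
    have := key i j
    rw [hr0 i, hr0 j, hS0] at this
    linarith
  have := hAentry q0.1.1 q0.1.2 q0.2
  rw [hA0] at this
  exact this.symm
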